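/- Under the assumptions of the GMD discretization-error bound (E_i ≤ c(ε_H/L)Σ_{j=0}^{i-2} a_j D_{ψ*}(z_{i-1}, z_j) - (1-c)A_{i-1}D_{ψ*}(z_{i-1}, z_i)), with ψ(x) = (μ/2)‖x‖² in a Euclidean space, (a_i/A_i)² = cμ/(LH_i), B_{k-1} = A_{k-1}H_k, and if (1-c')(1/B_{i-1} - 1/B_i) ≥ (cε_H/L)(1/B_i - 1/B_k) for all i ≤ k with c' ∈ [0,1], then c'Σ_{i=1}^k (1/B_{i-1} - 1/B_i)Σ_{j=0}^{i-1} a_j D_{ψ*}(z_i, z_j) + (c(1-c)/(2L))Σ_{i=1}^k (1 - B_{i-1}/B_k)‖∇f(x_i)‖² ≤ f(x_0) - f(x*). -/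

import Mathlib

open Finset

section Aux
variable {E : Type*} [NormedAddCommGroup E] [InnerProductSpace ℝ E] [CompleteSpace E]

lemma gmd_cs_sum_sq (s : Finset ℕ) (a : ℕ → ℝ) (u : ℕ → E) (ha : ∀ j ∈ s, 0 ≤ a j) :
    ‖∑ j ∈ s, a j • u j‖ ^ 2 ≤ (∑ j ∈ s, a j) * ∑ j ∈ s, a j * ‖u j‖ ^ 2 := by
  have h1 : ‖∑ j ∈ s, a j • u j‖ ≤ ∑ j ∈ s, a j * ‖u j‖ := by
    refine (norm_sum_le _ _).trans_eq ?_
    exact Finset.sum_congr rfl fun j hj => by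
      rw [norm_smul, Real.norm_eq_abs, abs_of_nonneg (ha j hj)]
  have h2 : (∑ j ∈ s, a j * ‖u j‖) ^ 2 ≤ (∑ j ∈ s, a j) * ∑ j ∈ s, a j * ‖u j‖ ^ 2 := by
    refine Finset.sum_sq_le_sum_mul_sum_of_sq_eq_mul s (fun j hj => ha j hj)
      (fun j hj => mul_nonneg (ha j hj) (sq_nonneg _)) (fun j hj => by ring)
  calc ‖∑ j ∈ s, a j • u j‖ ^ 2 ≤ (∑ j ∈ s, a j * ‖u j‖) ^ 2 := by
        apply pow_le_pow_left₀ (norm_nonneg _) h1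
      _ ≤ _ := h2

lemma gmd_descent {f : E → ℝ} {g : E → E} {L : ℝ}
    (hdiff : ∀ p, HasGradientAt f (g p) p) (hL : 0 ≤ L)
    (hsmooth : ∀ p q, ‖g p - g q‖ ≤ L * ‖p - q‖) (p q : E) :
    f q ≤ f p + (inner ℝ (g p) (q - p) : ℝ) + L / 2 * ‖q - p‖ ^ 2 := by
  set v := q - p with hv
  set φ : ℝ → ℝ := fun t => f (p + t • v) - t * (inner ℝ (g p) v : ℝ) - L / 2 * t ^ 2 * ‖v‖ ^ 2
    with hφ
  have hφd : ∀ t : ℝ, HasDerivAt φ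
      ((inner ℝ (g (p + t • v)) v : ℝ) - (inner ℝ (g p) v : ℝ) - L * t * ‖v‖ ^ 2) t := by
    intro t
    have hline : HasDerivAt (fun s : ℝ => p + s • v) v t := by
      simpa using ((hasDerivAt_id t).smul_const v).const_add p
    have h1 : HasDerivAt (fun s : ℝ => f (p + s • v)) ((inner ℝ (g (p + t • v)) v : ℝ)) t := by
      have := (hdiff (p + t • v)).hasFDerivAt.comp_hasDerivAt t hline
      exact this
    have h2 : HasDerivAt (fun s : ℝ => s * (inner ℝ (g p) v : ℝ)) ((inner ℝ (g p) v : ℝ)) t := by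
      simpa using (hasDerivAt_id t).mul_const ((inner ℝ (g p) v : ℝ))
    have h3 : HasDerivAt (fun s : ℝ => L / 2 * s ^ 2 * ‖v‖ ^ 2) (L * t * ‖v‖ ^ 2) t := by
      have := ((hasDerivAt_pow 2 t).const_mul (L / 2)).mul_const (‖v‖ ^ 2)
      refine this.congr_deriv ?_
      rw [show (2:ℕ) - 1 = 1 from rfl]
      push_cast
      ring
    exact (h1.sub h2).sub h3
  have hmono : AntitoneOn φ (Set.Icc (0:ℝ) 1) := by
    refine antitoneOn_of_deriv_nonpos (convex_Icc 0 1)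
      (fun t _ => ((hφd t).continuousAt).continuousWithinAt)
      (fun t _ => ((hφd t).differentiableAt).differentiableWithinAt) ?_
    intro t ht
    rw [interior_Icc] at ht
    rw [(hφd t).deriv]
    have h4 : (inner ℝ (g (p + t • v)) v : ℝ) - (inner ℝ (g p) v : ℝ)
        = (inner ℝ (g (p + t • v) - g p) v : ℝ) := (inner_sub_left _ _ _).symm
    have h5 : (inner ℝ (g (p + t • v) - g p) v : ℝ) ≤ ‖g (p + t • v) - g p‖ * ‖v‖ :=
      real_inner_le_norm _ _
    have h6 : ‖g (p + t • v) - g p‖ ≤ L * ‖t • v‖ := by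
      simpa using hsmooth (p + t • v) p
    have h7 : ‖t • v‖ = t * ‖v‖ := by
      rw [norm_smul, Real.norm_eq_abs, abs_of_pos ht.1]
    have h8 : ‖g (p + t • v) - g p‖ * ‖v‖ ≤ (L * (t * ‖v‖)) * ‖v‖ := by
      have := h6
      rw [h7] at this
      exact mul_le_mul_of_nonneg_right (by linarith) (norm_nonneg v)
    nlinarith [sq_nonneg ‖v‖]
  have h01 := hmono (Set.mem_Icc.mpr ⟨le_refl 0, zero_le_one⟩)
    (Set.mem_Icc.mpr ⟨zero_le_one, le_refl 1⟩) zero_le_one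
  have hφ0 : φ 0 = f p := by simp [hφ]
  have hφ1 : φ 1 = f q - (inner ℝ (g p) v : ℝ) - L / 2 * ‖v‖ ^ 2 := by
    simp [hφ, hv]
  rw [hφ0, hφ1] at h01
  linarith

end Aux

lemma gmd_w_eq (Bn Bk X : ℝ) (hBn : Bn ≠ 0) (hBk : Bk ≠ 0) :
    (1 - Bn / Bk) * (1 / Bn * X) = (1 / Bn - 1 / Bk) * X := by
  field_simp

lemma gmd_w_eq2 (K Bn Bk X : ℝ) (hBn : Bn ≠ 0) (hBk : Bk ≠ 0) :
    (1 - Bn / Bk) * (K * (1 / Bn * X)) = K * ((1 / Bn - 1 / Bk) * X) := by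
  field_simp

lemma gmd_coef (c L X : ℝ) (hL : L ≠ 0) :
    -(c / L) * X + L / 2 * ((c / L) ^ 2 * X) + c / (2 * L) * X
      = -(c * (1 - c) / (2 * L)) * X := by
  field_simp
  ring

set_option maxHeartbeats 1000000 in
/-- Final convergence bound for GMD in a Euclidean space with `ψ(x) = (μ/2)‖x‖²` (so
`∇ψ*(z) = z/μ` and `D_{ψ*}(w, z) = ‖w - z‖²/(2μ)`): if `(a_i/A_i)² = cμ/(L H_i)`,
`B_{i-1} = A_{i-1} H_i`, and `(1-c')(1/B_{i-1} - 1/B_i) ≥ (cε_H/L)(1/B_i - 1/B_k)` holds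
for all `1 ≤ i ≤ k` with `c, c' ∈ [0,1]`, then
`c' Σ_{i=1}^k (1/B_{i-1} - 1/B_i) Σ_{j=0}^{i-1} a_j D_{ψ*}(z_i, z_j)
  + (c(1-c)/(2L)) Σ_{i=1}^k (1 - B_{i-1}/B_k)‖∇f(x_i)‖² ≤ f(x₀) - f(x*)`. -/
theorem stmt_17 {E : Type*} [NormedAddCommGroup E] [InnerProductSpace ℝ E]
    [FiniteDimensional ℝ E]
    (μ L εH c c' : ℝ) (hμ : 0 < μ) (hL : 0 < L)
    (hεH : εH ∈ Set.Icc (0 : ℝ) L)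
    (hc : c ∈ Set.Icc (0 : ℝ) 1) (hc' : c' ∈ Set.Icc (0 : ℝ) 1)
    (f : E → ℝ) (g : E → E) (hdiff : ∀ p, HasGradientAt f (g p) p)
    (hfsmooth : ∀ p q, ‖g p - g q‖ ≤ L * ‖p - q‖)
    (hfweak : ∀ p q, f q ≥ f p + (inner ℝ (g p) (q - p) : ℝ) - εH / 2 * ‖q - p‖ ^ 2)
    (xstar : E) (hmin : ∀ u, f xstar ≤ f u)
    (a b A B H : ℕ → ℝ)
    (hapos : ∀ i, 0 < a i) (hbpos : ∀ i, 0 < b i)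
    (hApos : ∀ i, 0 < A i) (hHpos : ∀ i, 0 < H i)
    (hA : ∀ i, A i = ∑ j ∈ Finset.range (i + 1), a j)
    (hB : ∀ i, B i = ∑ j ∈ Finset.range (i + 1), b j)
    (hBH : ∀ i ≥ 1, B (i - 1) = A (i - 1) * H i)
    (hstep : ∀ i ≥ 1, (a i / A i) ^ 2 = c * μ / (L * H i))
    (x y : ℕ → E) (z : ℕ → E)
    (hx0 : x 0 = (μ⁻¹) • z 0) (hy0 : y 0 = (μ⁻¹) • z 0)
    (hx : ∀ i ≥ 1, x i = (A (i - 1) / A i) • y (i - 1) + (a i / A i) • ((μ⁻¹) • z (i - 1)))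
    (hz : ∀ i ≥ 1, z i = z (i - 1) - ((a i / A i) * H i) • g (x i))
    (hy : ∀ i ≥ 1, y i = x i + ((a i / A i) * μ⁻¹) • (z i - z (i - 1)))
    (k : ℕ) (hk : 1 ≤ k)
    (hcond : ∀ i, 1 ≤ i → i ≤ k →
      (1 - c') * (1 / B (i - 1) - 1 / B i) ≥ (c * εH / L) * (1 / B i - 1 / B k)) :
    c' * ∑ i ∈ Finset.Icc 1 k,
        (1 / B (i - 1) - 1 / B i) *
          ∑ j ∈ Finset.range i, a j * (‖z i - z j‖ ^ 2 / (2 * μ))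
      + (c * (1 - c) / (2 * L)) *
        ∑ i ∈ Finset.Icc 1 k, (1 - B (i - 1) / B k) * ‖g (x i)‖ ^ 2
      ≤ f (x 0) - f xstar := by
  obtain ⟨hc0, hc1⟩ := hc
  obtain ⟨hc'0, hc'1⟩ := hc'
  obtain ⟨hε0, hεL⟩ := hεH
  have hμne : μ ≠ 0 := hμ.ne'
  have hLne : L ≠ 0 := hL.ne'
  -- basic structural facts
  have hAsucc : ∀ n, A (n + 1) = A n + a (n + 1) := fun n => by
    rw [hA (n + 1), hA n, Finset.sum_range_succ]
  have hBpos : ∀ n, 0 < B n := fun n => by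
    rw [hB n]
    exact Finset.sum_pos (fun j _ => hbpos j) Finset.nonempty_range_add_one
  have hBmono : Monotone B := by
    apply monotone_nat_of_le_succ
    intro n
    have h1 : ∑ j ∈ Finset.range (n + 1 + 1), b j = ∑ j ∈ Finset.range (n + 1), b j + b (n + 1) :=
      Finset.sum_range_succ b (n + 1)
    rw [hB (n + 1), hB n, h1]
    linarith [hbpos (n + 1)]
  have hfgap : ∀ u, 0 ≤ f u - f xstar := fun u => sub_nonneg.mpr (hmin u)
  -- the memory terms
  set M : ℕ → ℝ := fun n => ∑ j ∈ Finset.range n, a j * (‖z n - z j‖ ^ 2 / (2 * μ)) with hM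
  have hMdef : ∀ n, M n = ∑ j ∈ Finset.range n, a j * (‖z n - z j‖ ^ 2 / (2 * μ)) :=
    fun n => rfl
  have hMnonneg : ∀ n, 0 ≤ M n := by
    intro n
    rw [hMdef]
    refine Finset.sum_nonneg fun j _ => mul_nonneg (hapos j).le (by positivity)
  have hM0 : M 0 = 0 := by rw [hMdef]; simp
  have hMns : ∀ n, ∑ j ∈ Finset.range n, a j * ‖z n - z j‖ ^ 2 = 2 * μ * M n := by
    intro n
    rw [hMdef, Finset.mul_sum]
    refine Finset.sum_congr rfl fun j _ => ?_
    field_simp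
  -- averaging lemma: A n • y n = ∑ a_j • (μ⁻¹ • z j)
  have havg : ∀ n, A n • y n = ∑ j ∈ Finset.range (n + 1), a j • ((μ:ℝ)⁻¹ • z j) := by
    intro n
    induction n with
    | zero =>
      rw [Finset.sum_range_one, hy0, show A 0 = a 0 from by rw [hA 0, Finset.sum_range_one]]
    | succ n ih =>
      have h1 := hy (n + 1) (by omega)
      have h2 := hx (n + 1) (by omega)
      simp only [Nat.add_sub_cancel] at h1 h2
      rw [Finset.sum_range_succ, ← ih, h1, h2]
      have hAne : A (n + 1) ≠ 0 := (hApos (n + 1)).ne'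
      simp only [smul_add, smul_sub, smul_smul]
      match_scalars <;> field_simp <;> ring
  -- per-step inequality
  have key : ∀ m : ℕ,
      f (y (m + 1)) + c * (1 - c) / (2 * L) * ‖g (x (m + 1))‖ ^ 2 + 1 / B m * M (m + 1)
        ≤ f (y m) + 1 / B m * M m + c * εH / L * (1 / B m * M m) := by
    intro m
    have hAm := hApos m
    have hAm1 := hApos (m + 1)
    have hHm1 := hHpos (m + 1)
    set τ : ℝ := a (m + 1) / A (m + 1) with hτdef
    have hτpos : 0 < τ := div_pos (hapos (m + 1)) hAm1
    have hBm : B m = A m * H (m + 1) := by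
      have := hBH (m + 1) (by omega)
      simpa using this
    have hBmpos : 0 < B m := hBpos m
    have hτsq : τ ^ 2 = c * μ / (L * H (m + 1)) := by
      have := hstep (m + 1) (by omega)
      simpa using this
    have h1y := hy (m + 1) (by omega)
    have h2x := hx (m + 1) (by omega)
    have h3z := hz (m + 1) (by omega)
    simp only [Nat.add_sub_cancel] at h1y h2x h3z
    set gm : E := g (x (m + 1)) with hgmdef
    -- (i) y_{m+1} = x_{m+1} - (c/L) • gm
    have hzdiff : z (m + 1) - z m = -((τ * H (m + 1)) • gm) := by
      rw [h3z]; abel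
    have hscal : τ * μ⁻¹ * (τ * H (m + 1)) = c / L := by
      have h : τ * μ⁻¹ * (τ * H (m + 1)) = τ ^ 2 * H (m + 1) / μ := by ring
      rw [h, hτsq]
      field_simp
    have hyx : y (m + 1) - x (m + 1) = -((c / L) • gm) := by
      rw [h1y, hzdiff]
      rw [smul_neg, smul_smul, hscal]
      abel
    -- (ii) descent step
    have hdesc : f (y (m + 1)) ≤ f (x (m + 1)) - c / L * ‖gm‖ ^ 2 + L / 2 * ((c / L) ^ 2 * ‖gm‖ ^ 2) := by
      have h := gmd_descent hdiff hL.le hfsmooth (x (m + 1)) (y (m + 1))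
      rw [hyx] at h
      have e1 : (inner ℝ gm (-((c / L) • gm)) : ℝ) = -(c / L * ‖gm‖ ^ 2) := by
        rw [inner_neg_right, real_inner_smul_right, real_inner_self_eq_norm_sq]
      have e2 : ‖-((c / L) • gm)‖ ^ 2 = (c / L) ^ 2 * ‖gm‖ ^ 2 := by
        rw [norm_neg, norm_smul, Real.norm_eq_abs, abs_of_nonneg (div_nonneg hc0 hL.le), mul_pow]
      rw [e1, e2] at h
      linarith
    -- (iii) weak convexity step
    have hweak : f (x (m + 1)) ≤ f (y m) + (inner ℝ gm (x (m + 1) - y m) : ℝ)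
        + εH / 2 * ‖x (m + 1) - y m‖ ^ 2 := by
      have h := hfweak (x (m + 1)) (y m)
      have e1 : (inner ℝ gm (y m - x (m + 1)) : ℝ) = -(inner ℝ gm (x (m + 1) - y m) : ℝ) := by
        rw [← inner_neg_right, neg_sub]
      have e2 : ‖y m - x (m + 1)‖ = ‖x (m + 1) - y m‖ := norm_sub_rev _ _
      rw [e1, e2] at h
      linarith
    -- (iv) the direction identity
    set W : E := ∑ j ∈ Finset.range (m + 1), a j • ((μ:ℝ)⁻¹ • (z m - z j)) with hW
    have hd1 : x (m + 1) - y m = τ • ((μ:ℝ)⁻¹ • z m - y m) := by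
      have hAmne : A (m + 1) ≠ 0 := hAm1.ne'
      have hAq : A m / A (m + 1) = 1 - τ := by
        rw [hτdef]
        field_simp
        linarith [hAsucc m]
      rw [h2x, hAq]
      module
    have hsub : A m • ((μ:ℝ)⁻¹ • z m - y m) = W := by
      rw [smul_sub, havg m, hW]
      rw [show A m • ((μ:ℝ)⁻¹ • z m) = ∑ j ∈ Finset.range (m + 1), a j • ((μ:ℝ)⁻¹ • z m) from by
        rw [← Finset.sum_smul, ← hA m]]
      rw [← Finset.sum_sub_distrib]
      exact Finset.sum_congr rfl fun j _ => by rw [← smul_sub, ← smul_sub]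
    have hd : x (m + 1) - y m = ((A m)⁻¹ * τ) • W := by
      have h : (A m)⁻¹ • (A m • ((μ:ℝ)⁻¹ • z m - y m)) = (A m)⁻¹ • W := by rw [hsub]
      rw [smul_smul, inv_mul_cancel₀ hAm.ne', one_smul] at h
      rw [hd1, h, smul_smul]
      rw [mul_comm τ (A m)⁻¹]
    -- polarization identity sums
    have hτH : τ * H (m + 1) ≠ 0 := (mul_pos hτpos hHm1).ne'
    have hgm : z m - z (m + 1) = (τ * H (m + 1)) • gm := by
      rw [h3z]; abel
    have hpol : ∀ j : ℕ, (inner ℝ (z m - z (m + 1)) (z m - z j) : ℝ)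
        = (‖z m - z (m + 1)‖ ^ 2 + ‖z m - z j‖ ^ 2 - ‖z (m + 1) - z j‖ ^ 2) / 2 := by
      intro j
      have h := norm_sub_sq_real (z m - z (m + 1)) (z m - z j)
      rw [show z m - z (m + 1) - (z m - z j) = z j - z (m + 1) from by abel] at h
      rw [show ‖z (m + 1) - z j‖ = ‖z j - z (m + 1)‖ from norm_sub_rev _ _]
      linarith
    set S : ℝ := ∑ j ∈ Finset.range (m + 1), a j * (inner ℝ (z m - z (m + 1)) (z m - z j) : ℝ)
      with hSdef
    have h2S : 2 * S = A m * ‖z m - z (m + 1)‖ ^ 2 + 2 * μ * M m - 2 * μ * M (m + 1) := by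
      rw [hSdef, Finset.mul_sum]
      calc ∑ j ∈ Finset.range (m + 1), 2 * (a j * (inner ℝ (z m - z (m + 1)) (z m - z j) : ℝ))
          = ∑ j ∈ Finset.range (m + 1), (a j * ‖z m - z (m + 1)‖ ^ 2
              + a j * ‖z m - z j‖ ^ 2 - a j * ‖z (m + 1) - z j‖ ^ 2) := by
            refine Finset.sum_congr rfl fun j _ => ?_
            rw [hpol j]; ring
        _ = (∑ j ∈ Finset.range (m + 1), a j * ‖z m - z (m + 1)‖ ^ 2)
              + (∑ j ∈ Finset.range (m + 1), a j * ‖z m - z j‖ ^ 2)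
              - (∑ j ∈ Finset.range (m + 1), a j * ‖z (m + 1) - z j‖ ^ 2) := by
            rw [Finset.sum_sub_distrib, Finset.sum_add_distrib]
        _ = A m * ‖z m - z (m + 1)‖ ^ 2 + 2 * μ * M m - 2 * μ * M (m + 1) := by
            rw [← Finset.sum_mul, ← hA m, hMns (m + 1)]
            congr 1
            rw [Finset.sum_range_succ, hMns m]
            simp
    -- (vi) inner ℝ product identity
    have hinner : (inner ℝ gm (x (m + 1) - y m) : ℝ)
        = c / (2 * L) * ‖gm‖ ^ 2 + 1 / B m * (M m - M (m + 1)) := by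
      have hiW : (τ * H (m + 1)) * (inner ℝ gm W : ℝ) = μ⁻¹ * S := by
        rw [hW, inner_sum, Finset.mul_sum, hSdef, Finset.mul_sum]
        refine Finset.sum_congr rfl fun j _ => ?_
        rw [real_inner_smul_right, real_inner_smul_right]
        rw [show (inner ℝ (z m - z (m + 1)) (z m - z j) : ℝ)
            = (τ * H (m + 1)) * (inner ℝ gm (z m - z j) : ℝ) from by
          rw [hgm, real_inner_smul_left]]
        ring
      have hid : (inner ℝ gm (x (m + 1) - y m) : ℝ) = ((A m)⁻¹ * τ) * (inner ℝ gm W : ℝ) := by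
        rw [hd, real_inner_smul_right]
      have hnz : ‖z m - z (m + 1)‖ ^ 2 = (τ * H (m + 1)) ^ 2 * ‖gm‖ ^ 2 := by
        rw [hgm, norm_smul, Real.norm_eq_abs, abs_of_pos (mul_pos hτpos hHm1), mul_pow]
      have hτsq' : τ ^ 2 * (L * H (m + 1)) = c * μ := by
        rw [hτsq]; field_simp
      have hfac : (0:ℝ) < 2 * μ * A m * H (m + 1) := by positivity
      apply mul_right_cancel₀ hfac.ne'
      have e1 : (inner ℝ gm (x (m + 1) - y m) : ℝ) * (2 * μ * A m * H (m + 1)) = 2 * S := by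
        rw [hid]
        rw [show ((A m)⁻¹ * τ) * (inner ℝ gm W : ℝ) * (2 * μ * A m * H (m + 1))
            = (2 * μ) * (((τ * H (m + 1)) * (inner ℝ gm W : ℝ)) * ((A m)⁻¹ * A m)) from by ring]
        rw [hiW, inv_mul_cancel₀ hAm.ne']
        field_simp
      rw [e1, hBm]
      have hc_eq : c = τ ^ 2 * L * H (m + 1) / μ := by
        rw [eq_div_iff hμne]; linarith [hτsq']
      rw [h2S, hnz, hc_eq]
      field_simp
      ring
    -- (vii) the weak-convexity error bound
    have hτsq' : τ ^ 2 * (L * H (m + 1)) = c * μ := by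
      rw [hτsq]; field_simp
    have hc_eq : c = τ ^ 2 * L * H (m + 1) / μ := by
      rw [eq_div_iff hμne]; linarith [hτsq']
    have hsum2 : ∑ j ∈ Finset.range (m + 1), a j * ‖(μ:ℝ)⁻¹ • (z m - z j)‖ ^ 2
        = 2 / μ * M m := by
      have hz2 : ∑ j ∈ Finset.range (m + 1), a j * ‖z m - z j‖ ^ 2 = 2 * μ * M m := by
        rw [Finset.sum_range_succ, hMns m]; simp
      calc ∑ j ∈ Finset.range (m + 1), a j * ‖(μ:ℝ)⁻¹ • (z m - z j)‖ ^ 2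
          = ∑ j ∈ Finset.range (m + 1), ((μ:ℝ)⁻¹) ^ 2 * (a j * ‖z m - z j‖ ^ 2) := by
            refine Finset.sum_congr rfl fun j _ => ?_
            rw [norm_smul, Real.norm_eq_abs, abs_of_pos (inv_pos.mpr hμ), mul_pow]
            ring
        _ = ((μ:ℝ)⁻¹) ^ 2 * (2 * μ * M m) := by rw [← Finset.mul_sum, hz2]
        _ = 2 / μ * M m := by field_simp
    have hW2 : ‖W‖ ^ 2 ≤ A m * (2 / μ * M m) := by
      have hcs := gmd_cs_sum_sq (Finset.range (m + 1)) a
        (fun j => (μ:ℝ)⁻¹ • (z m - z j)) (fun j _ => (hapos j).le)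
      rw [hsum2, ← hA m] at hcs
      exact hcs
    have hdb : ‖x (m + 1) - y m‖ ^ 2 ≤ 2 * c / (L * B m) * M m := by
      have hdn : ‖x (m + 1) - y m‖ ^ 2 = ((A m)⁻¹ * τ) ^ 2 * ‖W‖ ^ 2 := by
        rw [hd, norm_smul, Real.norm_eq_abs,
          abs_of_pos (mul_pos (inv_pos.mpr hAm) hτpos), mul_pow]
      rw [hdn]
      calc ((A m)⁻¹ * τ) ^ 2 * ‖W‖ ^ 2 ≤ ((A m)⁻¹ * τ) ^ 2 * (A m * (2 / μ * M m)) :=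
            mul_le_mul_of_nonneg_left hW2 (sq_nonneg _)
        _ = 2 * c / (L * B m) * M m := by
            rw [hBm, hc_eq]
            field_simp
    have hεd : εH / 2 * ‖x (m + 1) - y m‖ ^ 2 ≤ c * εH / L * (1 / B m * M m) := by
      have h1 : εH / 2 * ‖x (m + 1) - y m‖ ^ 2 ≤ εH / 2 * (2 * c / (L * B m) * M m) :=
        mul_le_mul_of_nonneg_left hdb (by linarith)
      have h2 : εH / 2 * (2 * c / (L * B m) * M m) = c * εH / L * (1 / B m * M m) := by
        ring
      exact h1.trans_eq h2
    -- combine everything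
    have hcomb := gmd_coef c L (‖gm‖ ^ 2) hLne
    linarith only [hdesc, hweak, hinner, hεd, hcomb]
  -- grand induction
  have main : ∀ n, n ≤ k →
      c' * ∑ i ∈ Finset.Icc 1 n, (1 / B (i - 1) - 1 / B i) * M i
        + c * (1 - c) / (2 * L) * ∑ i ∈ Finset.Icc 1 n, (1 - B (i - 1) / B k) * ‖g (x i)‖ ^ 2
        + (1 - B (n - 1) / B k) * (f (y n) - f xstar)
        + ((1 / B n - 1 / B k) + (1 - c') * (1 / B (n - 1) - 1 / B n)) * M n
      ≤ (1 - B 0 / B k) * (f (y 0) - f xstar) := by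
    intro n
    induction n with
    | zero =>
      intro _
      rw [show Finset.Icc 1 0 = ∅ from Finset.Icc_eq_empty (by omega)]
      simp only [Finset.sum_empty, mul_zero, Nat.zero_sub]
      rw [hM0]
      ring_nf
      exact le_rfl
    | succ n ih =>
      intro hnk1
      have hik := ih (by omega)
      rw [Finset.sum_Icc_succ_top (by omega : 1 ≤ n + 1),
        Finset.sum_Icc_succ_top (by omega : 1 ≤ n + 1)]
      simp only [Nat.add_sub_cancel]
      have hBn := hBpos n
      have hBn1 := hBpos (n + 1)
      have hBk := hBpos k
      have hwpos : (0:ℝ) ≤ 1 - B n / B k := by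
        rw [sub_nonneg, div_le_one hBk]
        exact hBmono (by omega)
      have hkeyw := mul_le_mul_of_nonneg_left (key n) hwpos
      have eM1 := gmd_w_eq (B n) (B k) (M (n + 1)) hBn.ne' hBk.ne'
      have eM0 := gmd_w_eq (B n) (B k) (M n) hBn.ne' hBk.ne'
      have eM0' := gmd_w_eq2 (c * εH / L) (B n) (B k) (M n) hBn.ne' hBk.ne'
      have eW : B (n - 1) / B k ≤ B n / B k :=
        (div_le_div_iff_of_pos_right hBk).mpr (hBmono (Nat.sub_le n 1))
      have P2 : ((1 - B n / B k) - (1 - B (n - 1) / B k)) * (f (y n) - f xstar) ≤ 0 := by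
        nlinarith [hfgap (y n), eW]
      have P3 : (c * εH / L) * (1 / B n - 1 / B k) * M n
          ≤ (1 - c') * (1 / B (n - 1) - 1 / B n) * M n := by
        rcases Nat.eq_zero_or_pos n with hn0 | hn1
        · subst hn0
          rw [hM0]
          simp
        · exact mul_le_mul_of_nonneg_right (hcond n hn1 (by omega)) (hMnonneg n)
      linarith only [hik, hkeyw, eM1, eM0, eM0', P2, P3]
  -- conclusion
  have hmain := main k le_rfl
  have hBkpos := hBpos k
  have t1 : 0 ≤ (1 - B (k - 1) / B k) * (f (y k) - f xstar) := by
    apply mul_nonneg _ (hfgap (y k))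
    rw [sub_nonneg, div_le_one hBkpos]
    exact hBmono (Nat.sub_le k 1)
  have t2 : 0 ≤ ((1 / B k - 1 / B k) + (1 - c') * (1 / B (k - 1) - 1 / B k)) * M k := by
    apply mul_nonneg _ (hMnonneg k)
    have h1 : 1 / B k ≤ 1 / B (k - 1) :=
      one_div_le_one_div_of_le (hBpos (k - 1)) (hBmono (Nat.sub_le k 1))
    nlinarith [hc'1]
  have t3 : (1 - B 0 / B k) * (f (y 0) - f xstar) ≤ f (y 0) - f xstar := by
    have h0 : 0 < B 0 / B k := div_pos (hBpos 0) hBkpos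
    nlinarith [hfgap (y 0)]
  have hyx0 : f (y 0) = f (x 0) := by rw [hy0, ← hx0]
  have hfin : c' * ∑ i ∈ Finset.Icc 1 k, (1 / B (i - 1) - 1 / B i) * M i
      + c * (1 - c) / (2 * L) * ∑ i ∈ Finset.Icc 1 k, (1 - B (i - 1) / B k) * ‖g (x i)‖ ^ 2
      ≤ f (x 0) - f xstar := by
    linarith only [hmain, t1, t2, t3, hyx0.le, hyx0.ge]
  simp only [hMdef] at hfin
  linarith only [hfin]
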